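/- For all nonnegative integers n and d, in ℚ[x] one has det(M_d) = det(M_d') · ∏_{s=0}^{2n−2} (x − s/2)^{f(d,s)}, where det(M_d) is regarded as an element of ℚ[x] via the inclusion ℤ[x] ⊂ ℚ[x]. -/

import Mathlib

open Finset Polynomial

namespace Capelli

/-- The set `ℙ_{k,n}` of pairs `μ = (μ₁, μ₂)` of nonnegative integers with `μ₁ ≥ μ₂`,
`μ₁ + μ₂ = k` and `μ₂ ≤ n`. -/
def Pkn (n k : ℕ) : Finset (ℕ × ℕ) :=
  (Finset.range (k + 1) ×ˢ Finset.range (k + 1)).filter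
    (fun μ => μ.2 ≤ μ.1 ∧ μ.1 + μ.2 = k ∧ μ.2 ≤ n)

/-- The set `ℙ*_{k,n}` of pairs `ν = (ν₁, ν₂)` of nonnegative integers with `ν₁ ≥ ν₂`,
`ν₁ + ν₂ = k` and `ν₂ ≥ ⌊k/2⌋ - n` (written here additively to avoid truncated subtraction). -/
def PknStar (n k : ℕ) : Finset (ℕ × ℕ) :=
  (Finset.range (k + 1) ×ˢ Finset.range (k + 1)).filter
    (fun ν => ν.2 ≤ ν.1 ∧ ν.1 + ν.2 = k ∧ k / 2 ≤ ν.2 + n)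

/-- `Λ_{d,n} = ⋃_{k=0}^d ℙ_{k,n}`. -/
def Lam (n d : ℕ) : Finset (ℕ × ℕ) := (Finset.range (d + 1)).biUnion (Pkn n)

/-- `Λ*_{d,n} = ⋃_{k=0}^d ℙ*_{k,n}`. -/
def LamStar (n d : ℕ) : Finset (ℕ × ℕ) := (Finset.range (d + 1)).biUnion (PknStar n)

/-- `ℓ_ν = min(ν₁ - ν₂, 2n + 1 - (ν₁ - ν₂))`. -/
def ell (n : ℕ) (ν : ℕ × ℕ) : ℕ := min (ν.1 - ν.2) (2 * n + 1 - (ν.1 - ν.2))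

/-- `Λ_{d,n,j} = {μ ∈ Λ_{d,n} : μ₂ ≥ j}`. -/
def Lamj (n d j : ℕ) : Finset (ℕ × ℕ) := (Lam n d).filter (fun μ => j ≤ μ.2)

/-- `Λ*_{d,n,j} = {ν ∈ Λ*_{d,n} : ν₂ ≤ ⌊|ν|/2⌋ - j}`. -/
def LamStarj (n d j : ℕ) : Finset (ℕ × ℕ) :=
  (LamStar n d).filter (fun ν => ν.2 + j ≤ (ν.1 + ν.2) / 2)

/-- `ν_{(j)} = (|ν| - ⌊|ν|/2⌋ + j, ⌊|ν|/2⌋ - j)`. -/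
def nuSub (ν : ℕ × ℕ) (j : ℕ) : ℕ × ℕ :=
  (ν.1 + ν.2 - (ν.1 + ν.2) / 2 + j, (ν.1 + ν.2) / 2 - j)

/-- The polynomial `λ_{μ,ν}(x) = ((2x+1)ℓ_ν - ℓ_ν²)^{μ₂} (ν₁+ν₂)^{μ₁-μ₂} ∈ ℤ[x]`. -/
noncomputable def lamPoly (n : ℕ) (μ ν : ℕ × ℕ) : Polynomial ℤ :=
  ((2 * X + 1) * C (ell n ν : ℤ) - C ((ell n ν : ℤ) ^ 2)) ^ μ.2 *
    C ((ν.1 + ν.2 : ℕ) : ℤ) ^ (μ.1 - μ.2)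

/-- The row ordering: `μ ⪯ μ'` iff `μ₂ < μ₂'`, or `μ₂ = μ₂'` and `μ₁ ≤ μ₁'`. -/
def rowRel (μ μ' : ℕ × ℕ) : Prop := μ.2 < μ'.2 ∨ (μ.2 = μ'.2 ∧ μ.1 ≤ μ'.1)

/-- The column ordering: `ν ⩽ ν'` iff `⌊(ν₁-ν₂)/2⌋ < ⌊(ν₁'-ν₂')/2⌋`, or these are equal and
`|ν| ≤ |ν'|`.  (A further tie-break by the first coordinate is added so that the relation is
antisymmetric on all of `ℕ × ℕ`; on `Λ*_{d,n}` a tie in the first two comparisons forces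
equality, so this agrees with the ordering of the paper there.) -/
def colRel (ν ν' : ℕ × ℕ) : Prop :=
  (ν.1 - ν.2) / 2 < (ν'.1 - ν'.2) / 2 ∨
    ((ν.1 - ν.2) / 2 = (ν'.1 - ν'.2) / 2 ∧
      (ν.1 + ν.2 < ν'.1 + ν'.2 ∨ (ν.1 + ν.2 = ν'.1 + ν'.2 ∧ ν.1 ≤ ν'.1)))

instance : DecidableRel rowRel := fun a b =>
  inferInstanceAs (Decidable (a.2 < b.2 ∨ (a.2 = b.2 ∧ a.1 ≤ b.1)))

instance : IsTrans (ℕ × ℕ) rowRel := ⟨by intro a b c; unfold rowRel; omega⟩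

instance : IsTotal (ℕ × ℕ) rowRel := ⟨by intro a b; unfold rowRel; omega⟩

instance : IsAntisymm (ℕ × ℕ) rowRel :=
  ⟨by intro a b h1 h2; unfold rowRel at h1 h2; rw [Prod.ext_iff]; omega⟩

instance : DecidableRel colRel := fun a b =>
  inferInstanceAs (Decidable ((a.1 - a.2) / 2 < (b.1 - b.2) / 2 ∨
    ((a.1 - a.2) / 2 = (b.1 - b.2) / 2 ∧
      (a.1 + a.2 < b.1 + b.2 ∨ (a.1 + a.2 = b.1 + b.2 ∧ a.1 ≤ b.1)))))

instance : IsTrans (ℕ × ℕ) colRel := ⟨by intro a b c; unfold colRel; omega⟩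

instance : IsTotal (ℕ × ℕ) colRel := ⟨by intro a b; unfold colRel; omega⟩

instance : IsAntisymm (ℕ × ℕ) colRel :=
  ⟨by intro a b h1 h2; unfold colRel at h1 h2; rw [Prod.ext_iff]; omega⟩

/-- The elements of `Λ_{d,n}` listed in increasing order for `⪯`. -/
def rowList (n d : ℕ) : List (ℕ × ℕ) := (Lam n d).sort rowRel

/-- The elements of `Λ*_{d,n}` listed in increasing order for `⩽`. -/
def colList (n d : ℕ) : List (ℕ × ℕ) := (LamStar n d).sort colRel

/-- The elements of `Λ_{d,n,j}` listed in increasing order for `⪯`. -/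
def rowListJ (n d j : ℕ) : List (ℕ × ℕ) := (Lamj n d j).sort rowRel

/-- The elements of `Λ*_{d,n,j}` listed in increasing order for `⩽`. -/
def colListJ (n d j : ℕ) : List (ℕ × ℕ) := (LamStarj n d j).sort colRel

/-- The matrix `M_d = [λ_{μ,ν}]` with rows indexed by `Λ_{d,n}` (ordered by `⪯`) and columns
indexed by `Λ*_{d,n}` (ordered by `⩽`); since `|Λ_{d,n}| = |Λ*_{d,n}|` the column list has
length `(Lam n d).card` and the `getD` access below always hits an actual entry. -/
noncomputable def Md (n d : ℕ) : Matrix (Fin (Lam n d).card) (Fin (Lam n d).card) (Polynomial ℤ) :=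
  fun i j => lamPoly n ((rowList n d).getD i.val (0, 0)) ((colList n d).getD j.val (0, 0))

/-- The matrix `M_d' = [(2ℓ_ν)^{μ₂}(ν₁+ν₂)^{μ₁-μ₂}]` of leading coefficients. -/
def Md' (n d : ℕ) : Matrix (Fin (Lam n d).card) (Fin (Lam n d).card) ℤ :=
  fun i j =>
    let μ := (rowList n d).getD i.val (0, 0)
    let ν := (colList n d).getD j.val (0, 0)
    (2 * (ell n ν : ℤ)) ^ μ.2 * ((ν.1 + ν.2 : ℕ) : ℤ) ^ (μ.1 - μ.2)

/-- `S_{μ,ν,j}` with `m = μ₂ - j`: the complete homogeneous symmetric polynomial of degree `m`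
evaluated at `ℓ_{ν_{(0)}}, …, ℓ_{ν_{(j-1)}}, ℓ_ν`, i.e. the sum over all `(j+1)`-tuples
`(a₀, …, a_j)` of nonnegative integers with `a₀ + ⋯ + a_j = m` of
`ℓ_{ν_{(0)}}^{a₀} ⋯ ℓ_{ν_{(j-1)}}^{a_{j-1}} ℓ_ν^{a_j}`. -/
def Shs (n : ℕ) (ν : ℕ × ℕ) (j m : ℕ) : ℕ :=
  ∑ a ∈ Finset.Nat.antidiagonalTuple (j + 1) m,
    ∏ i : Fin (j + 1), (if (i : ℕ) < j then ell n (nuSub ν (i : ℕ)) else ell n ν) ^ a i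

/-- The matrix `N_j = [2^{μ₂-j}(ν₁+ν₂)^{μ₁-μ₂} S_{μ,ν,j}]` with rows indexed by `Λ_{d,n,j}`
(ordered by `⪯`) and columns indexed by `Λ*_{d,n,j}` (ordered by `⩽`). -/
def Ndj (n d j : ℕ) : Matrix (Fin (Lamj n d j).card) (Fin (Lamj n d j).card) ℤ :=
  fun i i' =>
    let μ := (rowListJ n d j).getD i.val (0, 0)
    let ν := (colListJ n d j).getD i'.val (0, 0)
    2 ^ (μ.2 - j) * ((ν.1 + ν.2 : ℕ) : ℤ) ^ (μ.1 - μ.2) * (Shs n ν j (μ.2 - j) : ℤ)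

/-- The Vandermonde matrix `V(a, a+1, …, a+s-1) = [(a+j)^{i-1}]_{1 ≤ i,j ≤ s}` (0-indexed
as `[(a+j)^i]_{0 ≤ i,j ≤ s-1}`), with the convention `0⁰ = 1`. -/
def vandInt (a s : ℕ) : Matrix (Fin s) (Fin s) ℤ :=
  fun i j => ((a + (j : ℕ) : ℕ) : ℤ) ^ (i : ℕ)

/-- `f(d,s) = #{(ν,ν') ∈ Λ*_{d,n} × Λ*_{d,n} : |ν| = |ν'|, ℓ_{ν'} < ℓ_ν, ℓ_ν + ℓ_{ν'} - 1 = s}`. -/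
def fds (n d : ℕ) (s : ℤ) : ℕ :=
  (((LamStar n d) ×ˢ (LamStar n d)).filter
    (fun p => p.1.1 + p.1.2 = p.2.1 + p.2.2 ∧ ell n p.2 < ell n p.1 ∧
      (ell n p.1 : ℤ) + (ell n p.2 : ℤ) - 1 = s)).card

/-- `g_k(s) = #{(ν,ν') ∈ ℙ*_{k,n} × ℙ*_{k,n} : ℓ_{ν'} < ℓ_ν, ℓ_ν + ℓ_{ν'} - 1 = s}`. -/
def gks (n k : ℕ) (s : ℤ) : ℕ :=
  ((PknStar n k ×ˢ PknStar n k).filter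
    (fun p => ell n p.2 < ell n p.1 ∧ (ell n p.1 : ℤ) + (ell n p.2 : ℤ) - 1 = s)).card

/-! ### Auxiliary lemmas for the proof -/

section Aux

lemma mem_Pkn {n k : ℕ} {μ : ℕ × ℕ} : μ ∈ Pkn n k ↔ μ.2 ≤ μ.1 ∧ μ.1 + μ.2 = k ∧ μ.2 ≤ n := by
  simp only [Pkn, Finset.mem_filter, Finset.mem_product, Finset.mem_range]
  omega

lemma mem_PknStar {n k : ℕ} {ν : ℕ × ℕ} :
    ν ∈ PknStar n k ↔ ν.2 ≤ ν.1 ∧ ν.1 + ν.2 = k ∧ k / 2 ≤ ν.2 + n := by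
  simp only [PknStar, Finset.mem_filter, Finset.mem_product, Finset.mem_range]
  omega

lemma mem_Lam {n d : ℕ} {μ : ℕ × ℕ} :
    μ ∈ Lam n d ↔ μ.2 ≤ μ.1 ∧ μ.1 + μ.2 ≤ d ∧ μ.2 ≤ n := by
  simp only [Lam, Finset.mem_biUnion, Finset.mem_range, mem_Pkn]
  constructor
  · rintro ⟨k, hk, h⟩; omega
  · intro h; exact ⟨μ.1 + μ.2, by omega, by omega⟩

lemma mem_LamStar {n d : ℕ} {ν : ℕ × ℕ} :
    ν ∈ LamStar n d ↔ ν.2 ≤ ν.1 ∧ ν.1 + ν.2 ≤ d ∧ (ν.1 + ν.2) / 2 ≤ ν.2 + n := by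
  simp only [LamStar, Finset.mem_biUnion, Finset.mem_range, mem_PknStar]
  constructor
  · rintro ⟨k, hk, h⟩; omega
  · intro h; exact ⟨ν.1 + ν.2, by omega, by omega⟩

lemma mem_PknStar_of_mem_LamStar {n d k : ℕ} {ν : ℕ × ℕ} (h : ν ∈ LamStar n d)
    (hk : ν.1 + ν.2 = k) : ν ∈ PknStar n k := by
  rw [mem_LamStar] at h; rw [mem_PknStar]; omega

lemma ell_le {n : ℕ} (ν : ℕ × ℕ) : ell n ν ≤ n := by unfold ell; omega

lemma ell_injOn_block {n k : ℕ} {ν ν' : ℕ × ℕ} (h : ν ∈ PknStar n k) (h' : ν' ∈ PknStar n k)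
    (he : ell n ν = ell n ν') : ν = ν' := by
  rw [mem_PknStar] at h h'
  unfold ell at he
  have : ν.1 = ν'.1 ∧ ν.2 = ν'.2 := by omega
  exact Prod.ext this.1 this.2

lemma Pkn_eq_image (n k : ℕ) :
    Pkn n k = (Finset.range (min (k / 2) n + 1)).image (fun a => (k - a, a)) := by
  ext μ
  simp only [mem_Pkn, Finset.mem_image, Finset.mem_range]
  constructor
  · intro h; exact ⟨μ.2, by omega, by rw [Prod.ext_iff]; constructor <;> simp <;> omega⟩
  · rintro ⟨a, ha, rfl⟩; simp; omega

lemma PknStar_eq_image (n k : ℕ) :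
    PknStar n k = (Finset.range (min (k / 2) n + 1)).image
      (fun a => (k - (k / 2 - a), k / 2 - a)) := by
  ext ν
  simp only [mem_PknStar, Finset.mem_image, Finset.mem_range]
  constructor
  · intro h
    refine ⟨k / 2 - ν.2, by omega, ?_⟩
    rw [Prod.ext_iff]; constructor <;> simp <;> omega
  · rintro ⟨a, ha, rfl⟩; simp; omega

lemma card_Pkn (n k : ℕ) : (Pkn n k).card = min (k / 2) n + 1 := by
  rw [Pkn_eq_image, Finset.card_image_of_injOn, Finset.card_range]
  intro a _ b _ hab
  exact (Prod.ext_iff.1 hab).2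

lemma card_PknStar (n k : ℕ) : (PknStar n k).card = min (k / 2) n + 1 := by
  rw [PknStar_eq_image, Finset.card_image_of_injOn, Finset.card_range]
  intro a ha b hb hab
  simp only [Finset.coe_range, Set.mem_Iio] at ha hb
  have := (Prod.ext_iff.1 hab).2
  simp only at this
  omega

lemma sum_Pkn (n k : ℕ) :
    ∑ μ ∈ Pkn n k, μ.2 = ∑ a ∈ Finset.range (min (k / 2) n + 1), a := by
  rw [Pkn_eq_image, Finset.sum_image]
  intro a _ b _ hab
  exact (Prod.ext_iff.1 hab).2

lemma two_mul_card_filter_lt {α : Type*} [DecidableEq α] (T : Finset α) (g : α → ℕ)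
    (hg : ∀ a ∈ T, ∀ b ∈ T, g a = g b → a = b) :
    2 * ((T ×ˢ T).filter (fun p => g p.2 < g p.1)).card + T.card = T.card * T.card := by
  have hsplit := Finset.card_filter_add_card_filter_not
    (s := T ×ˢ T) (p := fun p => g p.2 < g p.1)
  have hsplit2 := Finset.card_filter_add_card_filter_not
    (s := (T ×ˢ T).filter (fun p => ¬ g p.2 < g p.1)) (p := fun p => g p.1 < g p.2)
  rw [Finset.filter_filter, Finset.filter_filter] at hsplit2
  have hswap : ((T ×ˢ T).filter (fun p => ¬ g p.2 < g p.1 ∧ g p.1 < g p.2)).card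
      = ((T ×ˢ T).filter (fun p => g p.2 < g p.1)).card := by
    apply Finset.card_bij (fun p _ => Prod.swap p)
    · intro p hp
      simp only [Finset.mem_filter, Finset.mem_product] at hp ⊢
      exact ⟨⟨hp.1.2, hp.1.1⟩, hp.2.2⟩
    · intro p hp q hq h
      exact Prod.swap_injective h
    · intro p hp
      simp only [Finset.mem_filter, Finset.mem_product] at hp ⊢
      exact ⟨Prod.swap p, ⟨⟨hp.1.2, hp.1.1⟩, by simp; omega⟩, by simp⟩
  have hdiag : ((T ×ˢ T).filter (fun p => ¬ g p.2 < g p.1 ∧ ¬ g p.1 < g p.2)).card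
      = T.card := by
    apply Finset.card_bij (fun p _ => p.1)
    · intro p hp
      simp only [Finset.mem_filter, Finset.mem_product] at hp
      exact hp.1.1
    · intro p hp q hq h
      simp only [Finset.mem_filter, Finset.mem_product] at hp hq
      have h1 : p.2 = p.1 := hg _ hp.1.2 _ hp.1.1 (by omega)
      have h2 : q.2 = q.1 := hg _ hq.1.2 _ hq.1.1 (by omega)
      rw [Prod.ext_iff]
      exact ⟨h, by rw [h1, h2, h]⟩
    · intro a ha
      exact ⟨(a, a), by simp [Finset.mem_filter, ha], rfl⟩
  rw [hswap, hdiag] at hsplit2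
  have hprod : (T ×ˢ T).card = T.card * T.card := Finset.card_product _ _
  rw [← hprod]
  omega

lemma sum_Pkn_eq_block_pairs (n k : ℕ) :
    ∑ μ ∈ Pkn n k, μ.2 =
      ((PknStar n k ×ˢ PknStar n k).filter (fun p => ell n p.2 < ell n p.1)).card := by
  have h1 := two_mul_card_filter_lt (PknStar n k) (ell n)
    (fun a ha b hb hab => ell_injOn_block ha hb hab)
  rw [card_PknStar] at h1
  rw [sum_Pkn]
  have hsum := Finset.sum_range_id_mul_two (min (k / 2) n + 1)
  have h2 : (min (k / 2) n + 1) * (min (k / 2) n + 1)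
      = (min (k / 2) n + 1) * (min (k / 2) n + 1 - 1) + (min (k / 2) n + 1) := by
    have : min (k / 2) n + 1 - 1 = min (k / 2) n := rfl
    rw [this]; ring
  set S := ∑ a ∈ Finset.range (min (k / 2) n + 1), a with hS
  set P := ((PknStar n k ×ˢ PknStar n k).filter (fun p => ell n p.2 < ell n p.1)).card with hP
  set A := (min (k / 2) n + 1) * (min (k / 2) n + 1) with hA
  set B := (min (k / 2) n + 1) * (min (k / 2) n + 1 - 1) with hB
  omega

lemma bigPairs_eq_biUnion (n d : ℕ) :
    ((LamStar n d ×ˢ LamStar n d).filter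
      (fun p => p.1.1 + p.1.2 = p.2.1 + p.2.2 ∧ ell n p.2 < ell n p.1))
    = (Finset.range (d + 1)).biUnion (fun k =>
        (PknStar n k ×ˢ PknStar n k).filter (fun p => ell n p.2 < ell n p.1)) := by
  ext p
  simp only [Finset.mem_filter, Finset.mem_product, Finset.mem_biUnion, Finset.mem_range,
    mem_LamStar, mem_PknStar]
  constructor
  · rintro ⟨⟨h1, h2⟩, h3, h4⟩
    refine ⟨p.1.1 + p.1.2, by omega, ⟨by omega, by omega⟩, h4⟩
  · rintro ⟨k, hk, ⟨ha, hb⟩, h4⟩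
    refine ⟨⟨by omega, by omega⟩, by omega, h4⟩

lemma disjoint_block_pairs (n : ℕ) {k k' : ℕ} (h : k ≠ k') :
    Disjoint ((PknStar n k ×ˢ PknStar n k).filter (fun p => ell n p.2 < ell n p.1))
      ((PknStar n k' ×ˢ PknStar n k').filter (fun p => ell n p.2 < ell n p.1)) := by
  rw [Finset.disjoint_left]
  intro p hp hp'
  simp only [Finset.mem_filter, Finset.mem_product, mem_PknStar] at hp hp'
  omega

lemma sum_mu2_eq_card_bigPairs (n d : ℕ) :
    ∑ μ ∈ Lam n d, μ.2 =
      ((LamStar n d ×ˢ LamStar n d).filter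
        (fun p => p.1.1 + p.1.2 = p.2.1 + p.2.2 ∧ ell n p.2 < ell n p.1)).card := by
  rw [bigPairs_eq_biUnion, Finset.card_biUnion
    (fun k _ k' _ hkk' => disjoint_block_pairs n hkk')]
  rw [Lam, Finset.sum_biUnion]
  · exact Finset.sum_congr rfl (fun k _ => sum_Pkn_eq_block_pairs n k)
  · intro k _ k' _ hkk'
    rw [Function.onFun, Finset.disjoint_left]
    intro μ hμ hμ'
    rw [mem_Pkn] at hμ hμ'
    omega

lemma sum_fds_eq (n d : ℕ) :
    ∑ s ∈ Finset.range (2 * n - 1), fds n d (s : ℤ) =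
      ((LamStar n d ×ˢ LamStar n d).filter
        (fun p => p.1.1 + p.1.2 = p.2.1 + p.2.2 ∧ ell n p.2 < ell n p.1)).card := by
  rw [Finset.card_eq_sum_card_fiberwise
    (f := fun p => ell n p.1 + ell n p.2 - 1) (t := Finset.range (2 * n - 1))]
  · apply Finset.sum_congr rfl
    intro s _
    rw [fds, Finset.filter_filter]
    apply congrArg
    apply Finset.filter_congr
    intro p _
    constructor
    · rintro ⟨h1, h2, h3⟩
      refine ⟨⟨h1, h2⟩, by omega⟩
    · rintro ⟨⟨h1, h2⟩, h3⟩
      refine ⟨h1, h2, by omega⟩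
  · intro p hp
    simp only [Finset.mem_coe, Finset.mem_filter] at hp
    have l1 := ell_le (n := n) p.1
    have l2 := ell_le (n := n) p.2
    rw [Finset.mem_coe, Finset.mem_range]
    dsimp only
    omega

lemma card_Lam_pos (n d : ℕ) : 0 < (Lam n d).card :=
  Finset.card_pos.2 ⟨(0, 0), mem_Lam.2 (by omega)⟩

lemma card_LamStar_eq (n d : ℕ) : (LamStar n d).card = (Lam n d).card := by
  rw [Lam, LamStar, Finset.card_biUnion, Finset.card_biUnion]
  · exact Finset.sum_congr rfl (fun k _ => by rw [card_Pkn, card_PknStar])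
  · intro k _ k' _ h
    rw [Function.onFun, Finset.disjoint_left]; intro μ hμ hμ'; rw [mem_Pkn] at hμ hμ'; omega
  · intro k _ k' _ h
    rw [Function.onFun, Finset.disjoint_left]; intro μ hμ hμ'; rw [mem_PknStar] at hμ hμ'; omega

lemma det_eq_pow_mul_det {R : Type*} [CommRing R] {m : Type*} [Fintype m] [DecidableEq m]
    (A B : Matrix m m R) (r : R) (T : Finset (m × m)) :
    (∀ q ∈ T, ∀ q' ∈ T, q.1 = q'.1 → q = q') →
    (∀ q ∈ T, ∀ q' ∈ T, q.2 ≠ q'.1) →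
    (∀ q ∈ T, q.1 ≠ q.2) →
    (∀ q ∈ T, ∀ i, A i q.1 = A i q.2 + r * B i q.1) →
    A.det = r ^ T.card *
      (Matrix.of fun i j => if j ∈ T.image Prod.fst then B i j else A i j).det := by
  induction T using Finset.induction_on with
  | empty =>
    intro _ _ _ _
    simp only [Finset.image_empty, Finset.notMem_empty, if_false, Finset.card_empty, pow_zero,
      one_mul]
    rfl
  | @insert q T' hq ih =>
    intro h1 h2 h3 h4
    have key := ih (fun a ha b hb => h1 a (Finset.mem_insert_of_mem ha) b
        (Finset.mem_insert_of_mem hb))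
      (fun a ha b hb => h2 a (Finset.mem_insert_of_mem ha) b (Finset.mem_insert_of_mem hb))
      (fun a ha => h3 a (Finset.mem_insert_of_mem ha))
      (fun a ha => h4 a (Finset.mem_insert_of_mem ha))
    set M' : Matrix m m R :=
      Matrix.of fun i j => if j ∈ T'.image Prod.fst then B i j else A i j with hM'
    set M : Matrix m m R :=
      Matrix.of fun i j => if j ∈ (insert q T').image Prod.fst then B i j else A i j with hM
    have hq1T' : q.1 ∉ T'.image Prod.fst := by
      intro hmem
      obtain ⟨q', hq', he⟩ := Finset.mem_image.1 hmem
      have := h1 q (Finset.mem_insert_self q T') q' (Finset.mem_insert_of_mem hq') he.symm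
      rw [this] at hq; exact hq hq'
    have hq2T' : q.2 ∉ T'.image Prod.fst := by
      intro hmem
      obtain ⟨q', hq', he⟩ := Finset.mem_image.1 hmem
      exact h2 q (Finset.mem_insert_self q T') q' (Finset.mem_insert_of_mem hq') he.symm
    have hMeq : M = M'.updateCol q.1 (fun i => B i q.1) := by
      ext i j
      rw [Matrix.updateCol_apply]
      by_cases hj : j = q.1
      · subst hj
        simp [hM, Finset.image_insert]
      · simp [hM, hM', Finset.image_insert, hj]
    have hcolM' : ∀ i, M' i q.1 = M' i q.2 + r * B i q.1 := by
      intro i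
      simp only [hM', Matrix.of_apply, if_neg hq1T', if_neg hq2T']
      exact h4 q (Finset.mem_insert_self q T') i
    have step1 : M' = M'.updateCol q.1 ((fun i => M' i q.2) + r • (fun i => B i q.1)) := by
      ext i j
      rw [Matrix.updateCol_apply]
      by_cases hj : j = q.1
      · subst hj
        simp only [if_pos rfl, Pi.add_apply, Pi.smul_apply, smul_eq_mul]
        exact hcolM' i
      · rw [if_neg hj]
    have hzero : (M'.updateCol q.1 (fun i => M' i q.2)).det = 0 := by
      have htr : (M'.updateCol q.1 fun i => M' i q.2)
          = (M'.transpose.updateRow q.1 fun i => M' i q.2).transpose := by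
        rw [← Matrix.updateCol_transpose, Matrix.transpose_transpose]
      rw [htr, Matrix.det_transpose]
      apply Matrix.det_zero_of_row_eq (h3 q (Finset.mem_insert_self q T'))
      funext i
      rw [Matrix.updateRow_self, Matrix.updateRow_ne (Ne.symm (h3 q (Finset.mem_insert_self q T')))]
      rfl
    have hdet : M'.det = r * M.det := by
      conv_lhs => rw [step1]
      rw [Matrix.det_updateCol_add, Matrix.det_updateCol_smul, hzero, hMeq]
      ring
    rw [key, hdet, Finset.card_insert_of_notMem hq, pow_succ]
    ring

lemma coeff_prod_of_natDegree_le' {R : Type*} [CommSemiring R] {ι : Type*} [DecidableEq ι]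
    (s : Finset ι) (p : ι → Polynomial R) (d : ι → ℕ) (h : ∀ i ∈ s, (p i).natDegree ≤ d i) :
    (∏ i ∈ s, p i).coeff (∑ i ∈ s, d i) = ∏ i ∈ s, (p i).coeff (d i) := by
  induction s using Finset.induction_on with
  | empty => simp
  | @insert a s ha ih =>
    rw [Finset.prod_insert ha, Finset.sum_insert ha, Finset.prod_insert ha]
    rw [Polynomial.coeff_mul_add_eq_of_natDegree_le (h a (Finset.mem_insert_self a s))
      (Polynomial.natDegree_prod_le s p |>.trans (Finset.sum_le_sum
        (fun i hi => h i (Finset.mem_insert_of_mem hi))))]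
    rw [ih (fun i hi => h i (Finset.mem_insert_of_mem hi))]

lemma sum_range_getD {α β : Type*} [AddCommMonoid β] (L : List α) (d₀ : α) (f : α → β) :
    ∑ i ∈ Finset.range L.length, f (L.getD i d₀) = (L.map f).sum := by
  induction L with
  | nil => simp
  | cons a t ih =>
    rw [List.length_cons, Finset.sum_range_succ']
    simp only [List.getD_cons_succ, List.getD_cons_zero, List.map_cons, List.sum_cons]
    rw [ih]
    exact add_comm _ _

lemma sum_getD_eq_finset_sum {α β : Type*} [AddCommMonoid β] [DecidableEq α] (s : Finset α)
    (r : α → α → Prop) [DecidableRel r] [IsTrans α r] [IsAntisymm α r] [IsTotal α r]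
    (d₀ : α) (f : α → β) :
    ∑ i ∈ Finset.range (s.sort r).length, f ((s.sort r).getD i d₀) = ∑ a ∈ s, f a := by
  rw [sum_range_getD]
  have hperm : List.Perm ((s.sort r).map f) (s.toList.map f) :=
    (Finset.sort_perm_toList (r := r) s).map f
  rw [hperm.sum_eq, Finset.sum_map_toList]

lemma base_id {R : Type*} [CommRing R] (a : R) :
    (2 * X + 1) * C a - C (a ^ 2) = C a * (C 2 * X + C (1 - a)) := by
  simp only [map_sub, C_1, map_ofNat, map_pow]
  ring

lemma entry_natDegree_le (e f : ℕ) (c k : ℚ) :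
    ((C c * (C 2 * X + C (1 - c))) ^ e * C k ^ f).natDegree ≤ e := by
  refine (Polynomial.natDegree_mul_le).trans ?_
  have h1 : ((C c * (C 2 * X + C (1 - c))) ^ e).natDegree ≤ e := by
    refine (Polynomial.natDegree_pow_le).trans ?_
    have : (C c * (C 2 * X + C (1 - c))).natDegree ≤ 1 := by
      refine (Polynomial.natDegree_mul_le).trans ?_
      simp only [Polynomial.natDegree_C, zero_add]
      exact Polynomial.natDegree_linear_le
    calc e * (C c * (C 2 * X + C (1 - c))).natDegree ≤ e * 1 := Nat.mul_le_mul_left e this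
      _ = e := mul_one e
  have h2 : ((C k ^ f : ℚ[X])).natDegree = 0 := by
    rw [← map_pow, Polynomial.natDegree_C]
  omega

lemma coeff_linear_pow (b : ℚ) (e : ℕ) :
    ((C 2 * X + C b) ^ e).coeff e = 2 ^ e := by
  have hdeg : ((C 2 * X + C b : ℚ[X]) ^ e).natDegree = e := by
    rw [Polynomial.natDegree_pow, Polynomial.natDegree_linear two_ne_zero, mul_one]
  have := Polynomial.coeff_natDegree (p := ((C 2 * X + C b : ℚ[X]) ^ e))
  rw [hdeg] at this
  rw [this, Polynomial.leadingCoeff_pow, Polynomial.leadingCoeff_linear two_ne_zero]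

lemma entry_coeff (e f : ℕ) (c k : ℚ) :
    ((C c * (C 2 * X + C (1 - c))) ^ e * C k ^ f).coeff e = (2 * c) ^ e * k ^ f := by
  rw [mul_pow, ← map_pow, ← map_pow, mul_comm (C (c ^ e)) _, mul_assoc, ← map_mul,
    Polynomial.coeff_mul_C, coeff_linear_pow]
  ring

lemma lamPoly_map (n : ℕ) (μ ν : ℕ × ℕ) :
    (lamPoly n μ ν).map (Int.castRingHom ℚ) =
      (C (ell n ν : ℚ) * (C 2 * X + C (1 - (ell n ν : ℚ)))) ^ μ.2 *
        C ((ν.1 + ν.2 : ℕ) : ℚ) ^ (μ.1 - μ.2) := by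
  rw [lamPoly, base_id]
  simp only [Polynomial.map_mul, Polynomial.map_pow, Polynomial.map_add, Polynomial.map_C,
    Polynomial.map_X]
  simp only [eq_intCast]
  push_cast
  ring

end Aux

section Main

variable (n d : ℕ)

lemma length_rowList : (rowList n d).length = (Lam n d).card := by
  rw [rowList, Finset.length_sort]

lemma length_colList : (colList n d).length = (Lam n d).card := by
  rw [colList, Finset.length_sort, card_LamStar_eq]

/-- The row `μ` for index `i`. -/
def rowGet (i : Fin (Lam n d).card) : ℕ × ℕ := (rowList n d).getD i.1 (0, 0)

/-- The column `ν` for index `j`. -/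
def colGet (j : Fin (Lam n d).card) : ℕ × ℕ := (colList n d).getD j.1 (0, 0)

/-- The index of a column `ν ∈ Λ*`. -/
def colIdx (ν : ℕ × ℕ) : Fin (Lam n d).card :=
  if h : ν ∈ colList n d then
    ⟨@List.idxOf (ℕ × ℕ) instBEqOfDecidableEq ν (colList n d), by
      rw [← length_colList]; exact (@List.idxOf_lt_length_iff _ instBEqOfDecidableEq _ _ _).2 h⟩
  else ⟨0, card_Lam_pos n d⟩

lemma colGet_colIdx {ν : ℕ × ℕ} (h : ν ∈ LamStar n d) : colGet n d (colIdx n d ν) = ν := by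
  have hmem : ν ∈ colList n d := (Finset.mem_sort _).2 h
  have hlt : @List.idxOf (ℕ × ℕ) instBEqOfDecidableEq ν (colList n d) < (colList n d).length :=
    (@List.idxOf_lt_length_iff _ instBEqOfDecidableEq _ _ _).2 hmem
  rw [colGet, colIdx, dif_pos hmem]
  dsimp only
  rw [List.getD_eq_getElem _ _ hlt]
  exact @List.getElem_idxOf _ instBEqOfDecidableEq _ _ _ hlt

lemma colIdx_injOn {ν ρ : ℕ × ℕ} (hν : ν ∈ LamStar n d) (hρ : ρ ∈ LamStar n d)
    (h : colIdx n d ν = colIdx n d ρ) : ν = ρ := by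
  rw [← colGet_colIdx n d hν, ← colGet_colIdx n d hρ, h]

lemma Md_apply (i j : Fin (Lam n d).card) :
    Md n d i j = lamPoly n (rowGet n d i) (colGet n d j) := rfl

lemma Md'_apply (i j : Fin (Lam n d).card) :
    Md' n d i j = (2 * (ell n (colGet n d j) : ℤ)) ^ (rowGet n d i).2 *
      ((colGet n d j).1 + (colGet n d j).2 : ℕ) ^ ((rowGet n d i).1 - (rowGet n d i).2) := rfl

/-- The matrix `M_d` with entries mapped to `ℚ[x]`. -/
noncomputable def Aq : Matrix (Fin (Lam n d).card) (Fin (Lam n d).card) (Polynomial ℚ) :=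
  (Md n d).map (Polynomial.mapRingHom (Int.castRingHom ℚ))

lemma det_Aq : (Md n d).det.map (Int.castRingHom ℚ) = (Aq n d).det := by
  have := RingHom.map_det (Polynomial.mapRingHom (Int.castRingHom ℚ)) (Md n d)
  exact this

lemma Aq_apply (i j : Fin (Lam n d).card) :
    Aq n d i j =
      (C (ell n (colGet n d j) : ℚ) * (C 2 * X + C (1 - (ell n (colGet n d j) : ℚ))))
          ^ (rowGet n d i).2 *
        C (((colGet n d j).1 + (colGet n d j).2 : ℕ) : ℚ) ^ ((rowGet n d i).1 - (rowGet n d i).2)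
    := by
  rw [Aq, Matrix.map_apply, Polynomial.coe_mapRingHom, Md_apply, lamPoly_map]

end Main

section Divisibility

variable (n d s : ℕ)

lemma pow_dvd_det :
    (X - C ((s : ℚ) / 2)) ^ fds n d (s : ℤ) ∣ (Aq n d).det := by
  classical
  set r : Polynomial ℚ := X - C ((s : ℚ) / 2) with hr
  have hrm : r.Monic := monic_X_sub_C _
  set Ps : Finset ((ℕ × ℕ) × (ℕ × ℕ)) := ((LamStar n d) ×ˢ (LamStar n d)).filter
    (fun p => p.1.1 + p.1.2 = p.2.1 + p.2.2 ∧ ell n p.2 < ell n p.1 ∧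
      (ell n p.1 : ℤ) + (ell n p.2 : ℤ) - 1 = (s : ℤ)) with hPs
  have hfds : fds n d (s : ℤ) = Ps.card := rfl
  have hmemPs : ∀ p ∈ Ps, p.1 ∈ LamStar n d ∧ p.2 ∈ LamStar n d ∧
      p.1.1 + p.1.2 = p.2.1 + p.2.2 ∧ ell n p.2 < ell n p.1 ∧
      (ell n p.1 : ℤ) + (ell n p.2 : ℤ) - 1 = (s : ℤ) := by
    intro p hp
    rw [hPs, Finset.mem_filter, Finset.mem_product] at hp
    exact ⟨hp.1.1, hp.1.2, hp.2⟩
  -- uniqueness of the partner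
  have huniq : ∀ a b c : ℕ × ℕ, (a, b) ∈ Ps → (a, c) ∈ Ps → b = c := by
    intro a b c hb hc
    obtain ⟨ha1, hb1, hb2, hb3, hb4⟩ := hmemPs _ hb
    obtain ⟨-, hc1, hc2, hc3, hc4⟩ := hmemPs _ hc
    dsimp only at hb1 hb2 hb3 hb4 hc1 hc2 hc3 hc4
    have hbk : b ∈ PknStar n (b.1 + b.2) := mem_PknStar_of_mem_LamStar hb1 rfl
    have hck : c ∈ PknStar n (b.1 + b.2) := mem_PknStar_of_mem_LamStar hc1 (by omega)
    exact ell_injOn_block hbk hck (by omega)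
  -- seconds are never firsts
  have hsndfst : ∀ p ∈ Ps, ∀ q ∈ Ps, p.2 ≠ q.1 := by
    intro p hp q hq he
    obtain ⟨_, _, _, hp3, hp4⟩ := hmemPs _ hp
    obtain ⟨_, _, _, hq3, hq4⟩ := hmemPs _ hq
    rw [he] at hp3 hp4
    omega
  set T : Finset (Fin (Lam n d).card × Fin (Lam n d).card) :=
    Ps.image (fun q => (colIdx n d q.1, colIdx n d q.2)) with hT
  have hTcard : T.card = Ps.card := by
    rw [hT]
    apply Finset.card_image_of_injOn
    intro p hp q hq he
    obtain ⟨hp1, hp2, -, -, -⟩ := hmemPs _ hp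
    obtain ⟨hq1, hq2, -, -, -⟩ := hmemPs _ hq
    have h1 : p.1 = q.1 := colIdx_injOn n d hp1 hq1 (congrArg Prod.fst he)
    have h2 : p.2 = q.2 := colIdx_injOn n d hp2 hq2 (congrArg Prod.snd he)
    exact Prod.ext h1 h2
  -- the partner function
  set σf : Fin (Lam n d).card → Fin (Lam n d).card := fun j =>
    if h : ∃ w, (colGet n d j, w) ∈ Ps then colIdx n d h.choose else j with hσf
  have hσspec : ∀ p ∈ Ps, σf (colIdx n d p.1) = colIdx n d p.2 := by
    intro p hp
    obtain ⟨hp1, hp2, -, -, -⟩ := hmemPs _ hp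
    have hcg : colGet n d (colIdx n d p.1) = p.1 := colGet_colIdx n d hp1
    have hex : ∃ w, (colGet n d (colIdx n d p.1), w) ∈ Ps := by
      rw [hcg]
      exact ⟨p.2, by rw [Prod.mk.eta]; exact hp⟩
    rw [hσf]
    simp only [dif_pos hex]
    obtain ⟨w, hw, hwe⟩ : ∃ w, (colGet n d (colIdx n d p.1), w) ∈ Ps ∧ Exists.choose hex = w :=
      ⟨hex.choose, hex.choose_spec, rfl⟩
    rw [hwe]
    rw [hcg] at hw
    congr 1
    exact huniq p.1 w p.2 hw (by rw [Prod.mk.eta]; exact hp)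
  set B : Matrix (Fin (Lam n d).card) (Fin (Lam n d).card) (Polynomial ℚ) :=
    Matrix.of fun i j => (Aq n d i j - Aq n d i (σf j)) /ₘ r with hB
  -- the key column relation
  have hcol : ∀ q ∈ T, ∀ i, Aq n d i q.1 = Aq n d i q.2 + r * B i q.1 := by
    intro q hq i
    obtain ⟨p, hp, rfl⟩ := Finset.mem_image.1 hq
    obtain ⟨hp1, hp2, hpk, hplt, hps⟩ := hmemPs _ hp
    have hcg1 : colGet n d (colIdx n d p.1) = p.1 := colGet_colIdx n d hp1
    have hcg2 : colGet n d (colIdx n d p.2) = p.2 := colGet_colIdx n d hp2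
    have hdvd : r ∣ Aq n d i (colIdx n d p.1) - Aq n d i (colIdx n d p.2) := by
      rw [Aq_apply, Aq_apply, hcg1, hcg2]
      set c1 : ℚ := (ell n p.1 : ℚ) with hc1
      set c2 : ℚ := (ell n p.2 : ℚ) with hc2
      set e := (rowGet n d i).2
      set f := (rowGet n d i).1 - (rowGet n d i).2
      have hkk : ((p.1.1 + p.1.2 : ℕ) : ℚ) = ((p.2.1 + p.2.2 : ℕ) : ℚ) := by
        rw [hpk]
      rw [← hkk]
      have hdiff : (C c1 * (C 2 * X + C (1 - c1))) ^ e * C ((p.1.1 + p.1.2 : ℕ) : ℚ) ^ f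
          - (C c2 * (C 2 * X + C (1 - c2))) ^ e * C ((p.1.1 + p.1.2 : ℕ) : ℚ) ^ f
          = ((C c1 * (C 2 * X + C (1 - c1))) ^ e - (C c2 * (C 2 * X + C (1 - c2))) ^ e) *
              C ((p.1.1 + p.1.2 : ℕ) : ℚ) ^ f := by ring
      rw [hdiff]
      apply Dvd.dvd.mul_right
      refine dvd_trans ?_ (sub_dvd_pow_sub_pow _ _ e)
      -- r divides the difference of the bases
      have hcs : c1 + c2 = (s : ℚ) + 1 := by
        have : (c1 + c2 - 1 : ℚ) = (s : ℚ) := by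
          rw [hc1, hc2]
          exact_mod_cast hps
        linarith
      have hbase : C c1 * (C 2 * X + C (1 - c1)) - C c2 * (C 2 * X + C (1 - c2))
          = (C (c1 - c2) * C 2) * r := by
        rw [hr]
        have h1 : (C (1 - c1) : Polynomial ℚ) = 1 - C c1 := by
          rw [map_sub, C_1]
        have h2 : (C (1 - c2) : Polynomial ℚ) = 1 - C c2 := by
          rw [map_sub, C_1]
        have h3 : (C (c1 - c2) : Polynomial ℚ) = C c1 - C c2 := map_sub C c1 c2
        have h4 : (C ((s : ℚ) / 2) : Polynomial ℚ) * C 2 = C c1 + C c2 - 1 := by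
          rw [← map_mul, div_mul_cancel₀ _ (two_ne_zero), ← map_add, ← map_one C, ← map_sub]
          congr 1
          linarith
        rw [h1, h2, h3]
        linear_combination (C c1 - C c2) * h4
      rw [hbase]
      exact dvd_mul_left r _
    have hmod : r * ((Aq n d i (colIdx n d p.1) - Aq n d i (colIdx n d p.2)) /ₘ r)
        = Aq n d i (colIdx n d p.1) - Aq n d i (colIdx n d p.2) := by
      have := Polynomial.modByMonic_add_div
        (Aq n d i (colIdx n d p.1) - Aq n d i (colIdx n d p.2)) r
      rw [(Polynomial.modByMonic_eq_zero_iff_dvd hrm).2 hdvd, zero_add] at this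
      exact this
    have hBval : B i (colIdx n d p.1)
        = (Aq n d i (colIdx n d p.1) - Aq n d i (colIdx n d p.2)) /ₘ r := by
      rw [hB, Matrix.of_apply, hσspec p hp]
    rw [hBval, hmod]
    ring
  -- hypotheses about the index pairs
  have h1 : ∀ q ∈ T, ∀ q' ∈ T, q.1 = q'.1 → q = q' := by
    intro q hq q' hq' he
    obtain ⟨p, hp, rfl⟩ := Finset.mem_image.1 hq
    obtain ⟨p', hp', rfl⟩ := Finset.mem_image.1 hq'
    obtain ⟨hp1, hp2, -, -, -⟩ := hmemPs _ hp
    obtain ⟨hp1', hp2', -, -, -⟩ := hmemPs _ hp'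
    have hff : p.1 = p'.1 := colIdx_injOn n d hp1 hp1' he
    have hss : p.2 = p'.2 := by
      apply huniq p.1 p.2 p'.2 (by rwa [Prod.mk.eta])
      rw [hff]; rwa [Prod.mk.eta]
    rw [hff, hss]
  have h2 : ∀ q ∈ T, ∀ q' ∈ T, q.2 ≠ q'.1 := by
    intro q hq q' hq' he
    obtain ⟨p, hp, rfl⟩ := Finset.mem_image.1 hq
    obtain ⟨p', hp', rfl⟩ := Finset.mem_image.1 hq'
    obtain ⟨hp1, hp2, -, -, -⟩ := hmemPs _ hp
    obtain ⟨hp1', hp2', -, -, -⟩ := hmemPs _ hp'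
    exact hsndfst p hp p' hp' (colIdx_injOn n d hp2 hp1' he)
  have h3 : ∀ q ∈ T, q.1 ≠ q.2 := by
    intro q hq he
    obtain ⟨p, hp, rfl⟩ := Finset.mem_image.1 hq
    obtain ⟨hp1, hp2, -, hlt, -⟩ := hmemPs _ hp
    have := colIdx_injOn n d hp1 hp2 he
    rw [this] at hlt
    omega
  have := det_eq_pow_mul_det (Aq n d) B r T h1 h2 h3 hcol
  rw [hfds, ← hTcard]
  exact ⟨_, this⟩

end Divisibility

section Coeff

variable (n d : ℕ)

lemma entry_natDegree (i j : Fin (Lam n d).card) :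
    (Aq n d i j).natDegree ≤ (rowGet n d i).2 := by
  rw [Aq_apply]
  exact entry_natDegree_le _ _ _ _

lemma entry_coeff' (i j : Fin (Lam n d).card) :
    (Aq n d i j).coeff (rowGet n d i).2 = ((Md' n d i j : ℤ) : ℚ) := by
  rw [Aq_apply, entry_coeff, Md'_apply]
  push_cast
  ring

lemma det_natDegree_le :
    (Aq n d).det.natDegree ≤ ∑ i : Fin (Lam n d).card, (rowGet n d i).2 := by
  rw [Matrix.det_apply']
  apply Polynomial.natDegree_sum_le_of_forall_le
  intro σ _
  refine Polynomial.natDegree_mul_le.trans ?_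
  rw [Polynomial.natDegree_intCast, zero_add]
  refine (Polynomial.natDegree_prod_le _ _).trans ?_
  rw [← Equiv.sum_comp σ (fun i => (rowGet n d i).2)]
  exact Finset.sum_le_sum (fun i _ => entry_natDegree n d (σ i) i)

lemma det_coeff :
    (Aq n d).det.coeff (∑ i : Fin (Lam n d).card, (rowGet n d i).2)
      = (((Md' n d).det : ℤ) : ℚ) := by
  have hrhs : (((Md' n d).det : ℤ) : ℚ) = ((Md' n d).map (Int.castRingHom ℚ)).det := by
    exact RingHom.map_det (Int.castRingHom ℚ) (Md' n d)
  rw [hrhs, Matrix.det_apply', Matrix.det_apply', Polynomial.finset_sum_coeff]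
  apply Finset.sum_congr rfl
  intro σ _
  have hc : ((Equiv.Perm.sign σ : ℤ) : Polynomial ℚ) = C ((Equiv.Perm.sign σ : ℤ) : ℚ) := by
    rw [Polynomial.C_eq_intCast]
  rw [hc, Polynomial.coeff_C_mul]
  congr 1
  rw [← Equiv.sum_comp σ (fun i => (rowGet n d i).2),
    coeff_prod_of_natDegree_le' _ _ _ (fun i _ => entry_natDegree n d (σ i) i)]
  apply Finset.prod_congr rfl
  intro i _
  rw [entry_coeff']
  rfl

lemma sum_rowGet_eq : ∑ i : Fin (Lam n d).card, (rowGet n d i).2 = ∑ μ ∈ Lam n d, μ.2 := by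
  simp only [rowGet]
  rw [Fin.sum_univ_eq_sum_range (fun i => ((rowList n d).getD i (0, 0)).2)]
  rw [← length_rowList, rowList]
  exact sum_getD_eq_finset_sum (Lam n d) rowRel (0, 0) (fun μ => μ.2)

end Coeff

/-- For all nonnegative integers `n` and `d`, in `ℚ[x]` one has
`det(M_d) = det(M_d') · ∏_{s=0}^{2n-2} (x - s/2)^{f(d,s)}`. -/
theorem det_Md_factorization (n d : ℕ) :
    (Md n d).det.map (Int.castRingHom ℚ) =
      C ((Md' n d).det : ℚ) *
        ∏ s ∈ Finset.range (2 * n - 1), (X - C ((s : ℚ) / 2)) ^ fds n d (s : ℤ) := by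
  classical
  set c : ℚ := ((Md' n d).det : ℚ) with hc
  set Q : Polynomial ℚ := ∏ s ∈ Finset.range (2 * n - 1), (X - C ((s : ℚ) / 2)) ^ fds n d (s : ℤ)
    with hQ
  set N : ℕ := ∑ s ∈ Finset.range (2 * n - 1), fds n d (s : ℤ) with hN
  have hQmonic : Q.Monic := monic_prod_of_monic _ _ (fun s _ => (monic_X_sub_C _).pow _)
  have hQdeg : Q.natDegree = N := by
    rw [hQ, Polynomial.natDegree_prod _ _ (fun s _ => ((monic_X_sub_C _).pow _).ne_zero), hN]
    exact Finset.sum_congr rfl (fun s _ => by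
      rw [Polynomial.natDegree_pow, Polynomial.natDegree_X_sub_C, mul_one])
  have hND : (Md n d).det.map (Int.castRingHom ℚ) = (Aq n d).det := det_Aq n d
  have hMsum : ∑ i : Fin (Lam n d).card, (rowGet n d i).2 = N := by
    rw [sum_rowGet_eq, sum_mu2_eq_card_bigPairs, hN, sum_fds_eq]
  have hdegle : (Aq n d).det.natDegree ≤ N := hMsum ▸ det_natDegree_le n d
  have hcoeff : (Aq n d).det.coeff N = c := by
    rw [← hMsum]; exact det_coeff n d
  have hdvd : Q ∣ (Aq n d).det := by
    rw [hQ]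
    apply Finset.prod_dvd_of_coprime
    · intro a ha b hb hab
      have hinj : Function.Injective (fun s : ℕ => ((s : ℚ) / 2)) := by
        intro a b h
        field_simp at h
        exact_mod_cast h
      exact ((Polynomial.pairwise_coprime_X_sub_C hinj hab).pow)
    · intro s _
      exact pow_dvd_det n d s
  obtain ⟨E, hE⟩ := hdvd
  rw [hND]
  by_cases hE0 : E = 0
  · rw [hE0, mul_zero] at hE
    have hc0 : c = 0 := by rw [← hcoeff, hE, Polynomial.coeff_zero]
    rw [hE, hc0, map_zero, zero_mul]
  · have hQ0 : Q ≠ 0 := hQmonic.ne_zero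
    have hdegE : E.natDegree = 0 := by
      have hmul := Polynomial.natDegree_mul hQ0 hE0
      rw [← hE] at hmul
      omega
    have hEC : E = C (E.coeff 0) := Polynomial.eq_C_of_natDegree_eq_zero hdegE
    have ha : E.coeff 0 = c := by
      have h1 : (Aq n d).det.coeff N = Q.coeff Q.natDegree * E.coeff 0 := by
        conv_lhs => rw [hE, hEC]
        rw [Polynomial.coeff_mul_C, hQdeg]
      rw [Polynomial.Monic.coeff_natDegree hQmonic, one_mul] at h1
      rw [← h1, hcoeff]
    rw [hE, hEC, ha, mul_comm]


end Capelli
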